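/- For a stabilizer code on n prime-dimensional qudits with k logical qudits, and any subset A of the qudits with complement A^c, the numbers of independent logical Pauli operators supported on A and on A^c satisfy ℓ(A) + ℓ(A^c) = 2k. Consequently, if k = 1 and a symmetry forces ℓ(A) to be even (e.g., ℓ^X(A) = ℓ^Z(A) in a self-dual CSS code), then either ℓ(A) = 2 or ℓ(A^c) = 2; i.e., the full logical algebra is reconstructable on A or on A^c. -/

import Mathlib

/-- The symplectic form on the phase space `(x, z)`-description of the
`n`-qudit Pauli group modulo phases (qudits of dimension `p`). -/
def sympForm (p n : ℕ) (u v : Fin n → ZMod p × ZMod p) : ZMod p :=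
  ∑ i, ((u i).1 * (v i).2 - (u i).2 * (v i).1)

/-- The submodule of Pauli phase-space vectors supported on a subset `A` of
the qudits. -/
def supportedOn (p n : ℕ) (A : Finset (Fin n)) :
    Submodule (ZMod p) (Fin n → ZMod p × ZMod p) where
  carrier := {v | ∀ i ∉ A, v i = 0}
  add_mem' := by
    intro a b ha hb i hi
    simp only [Pi.add_apply, ha i hi, hb i hi, add_zero]
  zero_mem' := by intro i _; rfl
  smul_mem' := by
    intro c v hv i hi
    simp only [Pi.smul_apply, hv i hi, smul_zero]

/-- The symplectic form as a bilinear form. -/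
noncomputable def sympBilin (p n : ℕ) :
    LinearMap.BilinForm (ZMod p) (Fin n → ZMod p × ZMod p) :=
  LinearMap.mk₂ (ZMod p) (sympForm p n)
    (by
      intro u u' v
      simp only [sympForm, ← Finset.sum_add_distrib]
      refine Finset.sum_congr rfl fun i _ => ?_
      simp only [Pi.add_apply, Prod.fst_add, Prod.snd_add]
      ring)
    (by
      intro a u v
      simp only [sympForm, Finset.mul_sum, smul_eq_mul]
      refine Finset.sum_congr rfl fun i _ => ?_
      simp only [Pi.smul_apply, Prod.smul_fst, Prod.smul_snd, smul_eq_mul]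
      ring)
    (by
      intro u v v'
      simp only [sympForm, ← Finset.sum_add_distrib]
      refine Finset.sum_congr rfl fun i _ => ?_
      simp only [Pi.add_apply, Prod.fst_add, Prod.snd_add]
      ring)
    (by
      intro a u v
      simp only [sympForm, Finset.mul_sum, smul_eq_mul]
      refine Finset.sum_congr rfl fun i _ => ?_
      simp only [Pi.smul_apply, Prod.smul_fst, Prod.smul_snd, smul_eq_mul]
      ring)

lemma sympBilin_apply (p n : ℕ) (u v : Fin n → ZMod p × ZMod p) :
    sympBilin p n u v = sympForm p n u v := rfl

lemma sympBilin_isAlt (p n : ℕ) : (sympBilin p n).IsAlt := by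
  intro u
  simp only [sympBilin_apply, sympForm]
  exact Finset.sum_eq_zero fun i _ => by ring

lemma sympForm_single_left (p n : ℕ) (i : Fin n) (x : ZMod p × ZMod p)
    (v : Fin n → ZMod p × ZMod p) :
    sympForm p n (Pi.single i x) v = x.1 * (v i).2 - x.2 * (v i).1 := by
  unfold sympForm
  rw [Finset.sum_eq_single i]
  · simp
  · intro j _ hj
    simp [Pi.single_eq_of_ne hj]
  · simp

lemma sympForm_antisymm (p n : ℕ) (u v : Fin n → ZMod p × ZMod p) :
    sympForm p n u v = - sympForm p n v u := by
  have h : sympForm p n u v + sympForm p n v u = 0 := by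
    rw [sympForm, sympForm, ← Finset.sum_add_distrib]
    exact Finset.sum_eq_zero fun i _ => by ring

  linear_combination h

lemma sympBilin_nondegenerate (p n : ℕ) : (sympBilin p n).Nondegenerate := by
  refine ⟨?_, fun v hv => ?_⟩
  swap
  · funext i
    have h1 := hv (Pi.single i (0, 1))
    have h2 := hv (Pi.single i (1, 0))
    rw [sympBilin_apply, sympForm_single_left] at h1 h2
    simp only [zero_mul, one_mul, mul_zero, zero_sub, sub_zero, neg_eq_zero] at h1 h2
    show v i = (0 : ZMod p × ZMod p)
    exact Prod.ext h1 h2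
  intro v hv
  funext i
  have h1 := hv (Pi.single i (0, 1))
  have h2 := hv (Pi.single i (1, 0))
  rw [sympBilin_apply, sympForm_antisymm, neg_eq_zero, sympForm_single_left] at h1 h2
  simp only [zero_mul, one_mul, mul_zero, zero_sub, sub_zero, neg_eq_zero] at h1 h2
  show v i = (0 : ZMod p × ZMod p)
  exact Prod.ext h1 h2

lemma orthogonal_sup {K V : Type*} [Field K] [AddCommGroup V] [Module K V]
    (B : LinearMap.BilinForm K V) (U W : Submodule K V) :
    B.orthogonal (U ⊔ W) = B.orthogonal U ⊓ B.orthogonal W := by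
  apply le_antisymm
  · exact le_inf (B.orthogonal_le le_sup_left) (B.orthogonal_le le_sup_right)
  · rintro x ⟨hU, hW⟩ u hu
    rcases Submodule.mem_sup.mp hu with ⟨a, ha, b, hb, rfl⟩
    have : B (a + b) x = B a x + B b x := by simp [map_add]
    rw [this, hU a ha, hW b hb, add_zero]

lemma finrank_map_mkQ {K V : Type*} [Field K] [AddCommGroup V] [Module K V]
    [FiniteDimensional K V] (S W : Submodule K V) :
    Module.finrank K (W.map S.mkQ) + Module.finrank K ↥(S ⊓ W) = Module.finrank K W := by
  set f := S.mkQ ∘ₗ W.subtype with hf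
  have hr : LinearMap.range f = W.map S.mkQ := by
    rw [hf, LinearMap.range_comp, Submodule.range_subtype]
  have hk : LinearMap.ker f = Submodule.comap W.subtype (S ⊓ W) := by
    rw [hf, LinearMap.ker_comp, Submodule.ker_mkQ]
    ext x
    simp only [Submodule.mem_comap, Submodule.mem_inf]
    exact ⟨fun h => ⟨h, x.2⟩, fun h => h.1⟩
  have hker : Module.finrank K (LinearMap.ker f) = Module.finrank K ↥(S ⊓ W) := by
    rw [hk]
    exact (Submodule.comapSubtypeEquivOfLe inf_le_right).finrank_eq
  have := LinearMap.finrank_range_add_finrank_ker f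
  rw [hr, hker] at this
  omega

theorem cleaning_lemma (p n k : ℕ) [Fact p.Prime] (hkn : k ≤ n)
    (S C : Submodule (ZMod p) (Fin n → ZMod p × ZMod p))
    (hiso : ∀ u ∈ S, ∀ v ∈ S, sympForm p n u v = 0)
    (hdimS : Module.finrank (ZMod p) S = n - k)
    (hC : ∀ v, v ∈ C ↔ ∀ s ∈ S, sympForm p n v s = 0) :
    (∀ A : Finset (Fin n),
      Module.finrank (ZMod p) (Submodule.map S.mkQ (C ⊓ supportedOn p n A)) +
        Module.finrank (ZMod p) (Submodule.map S.mkQ (C ⊓ supportedOn p n Aᶜ)) = 2 * k) ∧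
    (k = 1 → ∀ A : Finset (Fin n),
      Even (Module.finrank (ZMod p) (Submodule.map S.mkQ (C ⊓ supportedOn p n A))) →
      Module.finrank (ZMod p) (Submodule.map S.mkQ (C ⊓ supportedOn p n A)) = 2 ∨
      Module.finrank (ZMod p) (Submodule.map S.mkQ (C ⊓ supportedOn p n Aᶜ)) = 2) := by
  set B := sympBilin p n with hB
  have hAlt : B.IsAlt := sympBilin_isAlt p n
  have hRefl : B.IsRefl := hAlt.isRefl
  have hNd : B.Nondegenerate := sympBilin_nondegenerate p n
  -- antisymmetry
  have hanti : ∀ u v : Fin n → ZMod p × ZMod p, sympForm p n u v = - sympForm p n v u :=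
    sympForm_antisymm p n
  -- C is the orthogonal of S
  have hCeq : C = B.orthogonal S := by
    ext v
    rw [hC, LinearMap.BilinForm.mem_orthogonal_iff]
    constructor
    · intro h s hs
      show B s v = 0
      rw [sympBilin_apply, hanti, h s hs, neg_zero]
    · intro h s hs
      have := h s hs
      rw [hanti]
      simpa [LinearMap.BilinForm.IsOrtho, hB, sympBilin_apply] using congrArg Neg.neg this
  -- supportedOn A is the orthogonal of supportedOn Aᶜ
  have hsupp : ∀ A : Finset (Fin n),
      supportedOn p n A = B.orthogonal (supportedOn p n Aᶜ) := by
    intro A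
    ext v
    rw [LinearMap.BilinForm.mem_orthogonal_iff]
    constructor
    · intro hv w hw
      show B w v = 0
      rw [sympBilin_apply]
      refine Finset.sum_eq_zero fun i _ => ?_
      by_cases hi : i ∈ A
      · have : w i = 0 := hw i (by simp [hi])
        rw [this]; simp
      · have : v i = 0 := hv i hi
        rw [this]; simp
    · intro h i hi
      have hiA : i ∈ Aᶜ := Finset.mem_compl.mpr hi
      have hmem : ∀ x : ZMod p × ZMod p, Pi.single i x ∈ supportedOn p n Aᶜ := by
        intro x j hj
        have : j ≠ i := fun hji => hj (hji ▸ hiA)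
        exact Pi.single_eq_of_ne this _
      have h1 := h _ (hmem (0, 1))
      have h2 := h _ (hmem (1, 0))
      rw [sympBilin_apply, sympForm_single_left] at h1 h2
      simp only [zero_mul, one_mul, mul_zero, zero_sub, sub_zero, neg_eq_zero] at h1 h2
      show v i = (0 : ZMod p × ZMod p)
      exact Prod.ext h1 h2
  -- S ≤ C
  have hSC : S ≤ C := fun v hv => (hC v).mpr fun s hs => hiso v hv s hs
  -- total dimension
  have hVdim : Module.finrank (ZMod p) (Fin n → ZMod p × ZMod p) = 2 * n := by
    have : Module.finrank (ZMod p) (Fin n → ZMod p × ZMod p) = ∑ _i : Fin n, Module.finrank (ZMod p) (ZMod p × ZMod p) :=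
      Module.finrank_pi_fintype (ZMod p)
    rw [this]
    simp [Module.finrank_prod, two_mul, mul_comm]
  have hfin : FiniteDimensional (ZMod p) (Fin n → ZMod p × ZMod p) := by infer_instance
  -- key dimension count for a single subset
  have key : ∀ A : Finset (Fin n),
      Module.finrank (ZMod p) (Submodule.map S.mkQ (C ⊓ supportedOn p n A)) +
        Module.finrank (ZMod p) ↥(S ⊓ supportedOn p n A) +
        (Module.finrank (ZMod p) S + Module.finrank (ZMod p) (supportedOn p n Aᶜ)) =
      Module.finrank (ZMod p) (Fin n → ZMod p × ZMod p) + Module.finrank (ZMod p) ↥(S ⊓ supportedOn p n Aᶜ) := by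
    intro A
    have horth : C ⊓ supportedOn p n A = B.orthogonal (S ⊔ supportedOn p n Aᶜ) := by
      rw [orthogonal_sup, ← hCeq, hsupp A]
    have h1 := finrank_map_mkQ S (C ⊓ supportedOn p n A)
    have hSinf : S ⊓ (C ⊓ supportedOn p n A) = S ⊓ supportedOn p n A := by
      rw [← inf_assoc, inf_eq_left.mpr hSC]
    rw [hSinf] at h1
    have h2 := LinearMap.BilinForm.finrank_add_finrank_orthogonal hRefl
      (B := B) (S ⊔ supportedOn p n Aᶜ)
    rw [LinearMap.BilinForm.orthogonal_top_eq_bot hNd, inf_bot_eq, finrank_bot, add_zero] at h2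
    have h3 := Submodule.finrank_sup_add_finrank_inf_eq S (supportedOn p n Aᶜ)
    rw [← horth] at h2
    omega
  -- dimensions of supportedOn A and its complement add to 2n
  have hsuppdim : ∀ A : Finset (Fin n),
      Module.finrank (ZMod p) (supportedOn p n A) + Module.finrank (ZMod p) (supportedOn p n Aᶜ) =
        2 * n := by
    intro A
    have hinf : supportedOn p n A ⊓ supportedOn p n Aᶜ = ⊥ := by
      rw [eq_bot_iff]
      rintro v ⟨h1, h2⟩
      have : v = 0 := by
        funext i
        by_cases hi : i ∈ A
        · exact h2 i (by simp [hi])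
        · exact h1 i hi
      simp [this]
    have hsup : supportedOn p n A ⊔ supportedOn p n Aᶜ = ⊤ := by
      rw [eq_top_iff]
      intro v _
      refine Submodule.mem_sup.mpr ⟨fun i => if i ∈ A then v i else 0, ?_,
        fun i => if i ∈ A then 0 else v i, ?_, ?_⟩
      · intro i hi; simp [hi]
      · intro i hi
        have : i ∈ A := by simpa using hi
        simp [this]
      · funext i; by_cases hi : i ∈ A <;> simp [hi]
    have := Submodule.finrank_sup_add_finrank_inf_eq (supportedOn p n A) (supportedOn p n Aᶜ)
    rw [hinf, hsup, finrank_bot, finrank_top, add_zero, hVdim] at this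
    omega
  have main : ∀ A : Finset (Fin n),
      Module.finrank (ZMod p) (Submodule.map S.mkQ (C ⊓ supportedOn p n A)) +
        Module.finrank (ZMod p) (Submodule.map S.mkQ (C ⊓ supportedOn p n Aᶜ)) = 2 * k := by
    intro A
    have k1 := key A
    have k2 := key Aᶜ
    rw [compl_compl] at k2
    have hd := hsuppdim A
    rw [hdimS] at k1 k2
    omega
  refine ⟨main, fun hk1 A hev => ?_⟩
  have := main A
  rw [hk1, mul_one] at this
  rcases hev with ⟨c, hc⟩
  omega
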